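/- Kripke completeness of LC: the theory LC is sound and complete with respect to finite perfect Kripke models with tree frames, i.e. for every modal proposition A, LC ⊢ A if and only if A is forced at every node of every finite perfect Kripke model with a tree frame. -/

import Mathlib

namespace PLHA

/-! ## Modal propositional language -/

/-- Modal propositional formulas: atomic variables, ⊥, ∧, ∨, →, □. -/
inductive Form : Type
  | var : ℕ → Form
  | bot : Form
  | and : Form → Form → Form
  | or  : Form → Form → Form
  | imp : Form → Form → Form
  | box : Form → Form
  deriving DecidableEq

namespace Form

/-- ⊤ -/
def top : Form := imp bot bot

/-- A ↔ B -/
def iffF (A B : Form) : Form := and (imp A B) (imp B A)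

/-- ⊡A := A ∧ □A -/
def boxdot (A : Form) : Form := and A (box A)

/-- `A ∈ NOI`: every occurrence of → is in the scope of some □. -/
def noi : Form → Bool
  | var _ => true
  | bot => true
  | and A B => noi A && noi B
  | or A B => noi A && noi B
  | imp _ _ => false
  | box _ => true

/-- The Leivant translation `A^l`. -/
def lev : Form → Form
  | var n => var n
  | bot => bot
  | and A B => and (lev A) (lev B)
  | or A B => or (boxdot (lev A)) (boxdot (lev B))
  | imp A B => if noi A then imp A (lev B) else imp A B
  | box A => box A

/-- atomic propositions: atomic variables and ⊥. -/
def isAtom (A : Form) : Prop := (∃ n, A = var n) ∨ A = bot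

/-- boxed propositions. -/
def isBoxed (A : Form) : Prop := ∃ B, A = box B

/-- non-modal (□-free) propositions. -/
def boxFree : Form → Bool
  | var _ => true
  | bot => true
  | and A B => boxFree A && boxFree B
  | or A B => boxFree A && boxFree B
  | imp A B => boxFree A && boxFree B
  | box _ => false

/-- A bound on the indices of the variables occurring in a formula. -/
def fvb : Form → ℕ
  | var n => n + 1
  | bot => 0
  | and A B => max (fvb A) (fvb B)
  | or A B => max (fvb A) (fvb B)
  | imp A B => max (fvb A) (fvb B)
  | box A => fvb A

/-- maximal nesting depth of boxes. -/
def bdep : Form → ℕ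
  | var _ => 0
  | bot => 0
  | and A B => max (bdep A) (bdep B)
  | or A B => max (bdep A) (bdep B)
  | imp A B => max (bdep A) (bdep B)
  | box A => bdep A + 1

/-- the complexity measure ρ used to define NNIL. -/
def rho : Form → ℕ
  | var _ => 0
  | bot => 0
  | and A B => max (rho A) (rho B)
  | or A B => max (rho A) (rho B)
  | imp A B => max (rho A + 1) (rho B)
  | box _ => 0

end Form

/-- NNIL: no nested implications to the left. -/
def NNILc (A : Form) : Prop := Form.rho A ≤ 1

/-- TNNIL: thoroughly NNIL propositions. -/
inductive TNNIL : Form → Prop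
  | var (n : ℕ) : TNNIL (.var n)
  | bot : TNNIL .bot
  | and {A B} : TNNIL A → TNNIL B → TNNIL (.and A B)
  | or {A B} : TNNIL A → TNNIL B → TNNIL (.or A B)
  | box {A} : TNNIL A → TNNIL (.box A)
  | imp {A B} : A.noi = true → TNNIL A → TNNIL B → TNNIL (.imp A B)

/-- TNNIL⁻: propositions of the form B(□C₁,…,□Cₙ) with B non-modal and Cᵢ ∈ TNNIL. -/
inductive TNNILminus : Form → Prop
  | var (n : ℕ) : TNNILminus (.var n)
  | bot : TNNILminus .bot
  | box {A} : TNNIL A → TNNILminus (.box A)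
  | and {A B} : TNNILminus A → TNNILminus B → TNNILminus (.and A B)
  | or {A B} : TNNILminus A → TNNILminus B → TNNILminus (.or A B)
  | imp {A B} : TNNILminus A → TNNILminus B → TNNILminus (.imp A B)

/-! ## Proof systems -/

/-- Hilbert-style axioms of intuitionistic propositional logic (over the modal language). -/
inductive IpcAx : Form → Prop
  | a1 (A B) : IpcAx (.imp A (.imp B A))
  | a2 (A B C) : IpcAx (.imp (.imp A (.imp B C)) (.imp (.imp A B) (.imp A C)))
  | a3 (A B) : IpcAx (.imp A (.imp B (.and A B)))
  | a4 (A B) : IpcAx (.imp (.and A B) A)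
  | a5 (A B) : IpcAx (.imp (.and A B) B)
  | a6 (A B) : IpcAx (.imp A (.or A B))
  | a7 (A B) : IpcAx (.imp B (.or A B))
  | a8 (A B C) : IpcAx (.imp (.imp A C) (.imp (.imp B C) (.imp (.or A B) C)))
  | a9 (A) : IpcAx (.imp .bot A)

/-- Derivability from IPC axioms together with extra axioms `Ax`, modus ponens,
and (if `useNec = true`) the necessitation rule. -/
inductive Proves (Ax : Form → Prop) (useNec : Bool) : Form → Prop
  | ax {A} : Ax A → Proves Ax useNec A
  | ipc {A} : IpcAx A → Proves Ax useNec A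
  | mp {A B} : Proves Ax useNec (.imp A B) → Proves Ax useNec A → Proves Ax useNec B
  | nec {A} : useNec = true → Proves Ax useNec A → Proves Ax useNec (.box A)

/-- K and 4 axiom schemas. -/
inductive K4Ax : Form → Prop
  | k (A B) : K4Ax (.imp (.box (.imp A B)) (.imp (.box A) (.box B)))
  | four (A) : K4Ax (.imp (.box A) (.box (.box A)))

/-- K, 4, and Löb's axiom schemas. -/
inductive GLAx : Form → Prop
  | k (A B) : GLAx (.imp (.box (.imp A B)) (.imp (.box A) (.box B)))
  | four (A) : GLAx (.imp (.box A) (.box (.box A)))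
  | lob (A) : GLAx (.imp (.box (.imp (.box A) A)) (.box A))

/-- IPC_□ : intuitionistic propositional logic over the modal language. -/
def IPCbProves : Form → Prop := Proves (fun _ => False) false

/-- iK4. -/
def iK4Proves : Form → Prop := Proves K4Ax true

/-- iGL. -/
def iGLProves : Form → Prop := Proves GLAx true

/-- the completeness principle CP : A → □A. -/
def CPAx : Form → Prop := fun F => ∃ A : Form, F = .imp A (.box A)

/-- LC := iGL + CP. -/
def LCProves : Form → Prop := Proves (fun F => GLAx F ∨ CPAx F) true

/-- CP restricted to atomic propositions. -/
def CPaAx : Form → Prop := fun F => ∃ A : Form, A.isAtom ∧ F = .imp A (.box A)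

/-- the extended Leivant principle Le⁺ : □A → □A^l. -/
def LeplusAx : Form → Prop := fun F => ∃ A : Form, F = .imp (.box A) (.box A.lev)

/-- LLe⁺ := iGL + Le⁺ + CP_a. -/
def LLeplusProves : Form → Prop := Proves (fun F => GLAx F ∨ LeplusAx F ∨ CPaAx F) true

/-! ## The preservativity relation ▶ -/

/-- the bracket operation [A]B. -/
def bracket (A : Form) : Form → Form
  | .and B C => .and (bracket A B) (bracket A C)
  | .or B C => .or (bracket A B) (bracket A C)
  | .imp B C => .imp A (.imp B C)
  | B => B

def listConj : List Form → Form
  | [] => Form.top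
  | [A] => A
  | A :: l => .and A (listConj l)

def listDisj : List Form → Form
  | [] => Form.bot
  | [A] => A
  | A :: l => .or A (listDisj l)

/-- the relation ▶ : the smallest relation satisfying A1–A4 and B1–B3.
In B2 a (finite) set of implications is represented by a list `X` of pairs `(E, F)`
standing for the implications `E → F`. -/
inductive Pres : Form → Form → Prop
  | a1 {A B} : iK4Proves (.imp A B) → Pres A B
  | a2 {A B C} : Pres A B → Pres B C → Pres A C
  | a3 {A B C} : Pres C A → Pres C B → Pres C (.and A B)
  | a4 {A B} : Pres A B → Pres (.box A) (.box B)
  | b1 {A B C} : Pres A C → Pres B C → Pres (.or A B) C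
  | b2 (X : List (Form × Form)) (C : Form) :
      Pres (.imp (listConj (X.map fun p => Form.imp p.1 p.2)) C)
        (listDisj ((X.map Prod.fst ++ [C]).map
          (bracket (listConj (X.map fun p => Form.imp p.1 p.2)))))
  | b3 {A B C} : Pres A B → (C.isAtom ∨ C.isBoxed) → Pres (.imp C A) (.imp C B)

/-- the axioms of H_σ : LLe⁺ + CP_a + {□A→□B : A ▶ B}. -/
def HsigmaAx : Form → Prop := fun F =>
  GLAx F ∨ LeplusAx F ∨ CPaAx F ∨ ∃ A B : Form, Pres A B ∧ F = .imp (.box A) (.box B)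

/-- H_σ. -/
def HsigmaProves : Form → Prop := Proves HsigmaAx true

/-! ## NNIL/TNNIL approximations -/

/-- `star` is (a realization of) Visser's NNIL-algorithm: `star A` is the best NNIL
approximation of `A` from below. -/
def IsNNILApproxOp (star : Form → Form) : Prop :=
  ∀ A : Form, NNILc (star A) ∧ IPCbProves (.imp (star A) A) ∧
    ∀ B : Form, NNILc B → IPCbProves (.imp B A) → IPCbProves (.imp B (star A))

/-- replace the outermost boxed subformulas of a formula by the fresh variables
`k, k+1, …` (left to right), returning the resulting non-modal skeleton together
with the list of bodies of removed boxes. -/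
def strip : Form → ℕ → Form × List Form
  | .var n, _ => (.var n, [])
  | .bot, _ => (.bot, [])
  | .and A B, k =>
      let pa := strip A k
      let pb := strip B (k + pa.2.length)
      (.and pa.1 pb.1, pa.2 ++ pb.2)
  | .or A B, k =>
      let pa := strip A k
      let pb := strip B (k + pa.2.length)
      (.or pa.1 pb.1, pa.2 ++ pb.2)
  | .imp A B, k =>
      let pa := strip A k
      let pb := strip B (k + pa.2.length)
      (.imp pa.1 pb.1, pa.2 ++ pb.2)
  | .box A, k => (.var k, [A])

/-- simultaneous substitution of formulas for variables. -/
def substF (f : ℕ → Form) : Form → Form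
  | .var n => f n
  | .bot => .bot
  | .and A B => .and (substF f A) (substF f B)
  | .or A B => .or (substF f A) (substF f B)
  | .imp A B => .imp (substF f A) (substF f B)
  | .box A => .box (substF f A)

/-- fuelled version of the TNNIL approximation `A⁺`:
`A⁺ := (A')^*[pᵢ | □Bᵢ⁺]` where `A = A'[pᵢ | □Bᵢ]` with `A'` non-modal. -/
def plusAux (star : Form → Form) : ℕ → Form → Form
  | 0, A => A
  | fuel + 1, A =>
      let k := A.fvb
      let p := strip A k
      substF (fun n =>
        if k ≤ n ∧ n < k + p.2.length then
          .box (plusAux star fuel (p.2.getD (n - k) .bot))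
        else .var n) (star p.1)

/-- the TNNIL approximation `A⁺` (relative to a realization `star` of the NNIL-algorithm). -/
def plusF (star : Form → Form) (A : Form) : Form := plusAux star (A.bdep + 1) A

/-- `A⁻`: writing `A = B(□C₁,…,□Cₙ)` with `B` non-modal, `A⁻ := B(□C₁⁺,…,□Cₙ⁺)`. -/
def minusF (star : Form → Form) (A : Form) : Form :=
  let k := A.fvb
  let p := strip A k
  substF (fun n =>
    if k ≤ n ∧ n < k + p.2.length then
      .box (plusF star (p.2.getD (n - k) .bot))
    else .var n) p.1

/-- the box translation A^□. -/
def boxTr : Form → Form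
  | .var n => Form.boxdot (.var n)
  | .bot => Form.boxdot .bot
  | .and A B => .and (boxTr A) (boxTr B)
  | .or A B => .or (boxTr A) (boxTr B)
  | .imp A B => Form.boxdot (.imp (boxTr A) (boxTr B))
  | .box A => .box (boxTr A)

/-- a Gödel numbering of modal formulas. -/
def encodeForm : Form → ℕ
  | .var n => Nat.pair 0 n
  | .bot => Nat.pair 1 0
  | .and A B => Nat.pair 2 (Nat.pair (encodeForm A) (encodeForm B))
  | .or A B => Nat.pair 3 (Nat.pair (encodeForm A) (encodeForm B))
  | .imp A B => Nat.pair 4 (Nat.pair (encodeForm A) (encodeForm B))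
  | .box A => Nat.pair 5 (encodeForm A)

/-! ## Propositional Kripke models -/

/-- Kripke models for intuitionistic modal logic. -/
structure PKripke where
  W : Type
  le : W → W → Prop
  r : W → W → Prop
  V : W → ℕ → Prop
  le_refl : ∀ w, le w w
  le_trans : ∀ {a b c}, le a b → le b c → le a c
  le_antisymm : ∀ {a b}, le a b → le b a → a = b
  le_r : ∀ {a b c}, le a b → r b c → r a c
  mono : ∀ {a b : W} {n : ℕ}, le a b → V a n → V b n

/-- the forcing relation of a propositional modal Kripke model. -/
def pforces (M : PKripke) : Form → M.W → Prop
  | .var n, w => M.V w n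
  | .bot, _ => False
  | .and A B, w => pforces M A w ∧ pforces M B w
  | .or A B, w => pforces M A w ∨ pforces M B w
  | .imp A B, w => ∀ v, M.le w v → pforces M A v → pforces M B v
  | .box A, w => ∀ v, M.r w v → pforces M A v

namespace PKripke

/-- brilliant: (R;≤) ⊆ R. -/
def Brilliant (M : PKripke) : Prop := ∀ {a b c : M.W}, M.r a b → M.le b c → M.r a c

/-- reverse well-founded: well-founded with respect to R⁻¹. -/
def RevWF (M : PKripke) : Prop := WellFounded (fun a b : M.W => M.r b a)

/-- perfect: brilliant, reverse well-founded, and R ⊆ <. -/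
def Perfect (M : PKripke) : Prop :=
  M.Brilliant ∧ M.RevWF ∧ ∀ {a b : M.W}, M.r a b → M.le a b ∧ a ≠ b

/-- the partial order (W,≤) is a tree: it has a root and the set of predecessors
of every node is linearly ordered. -/
def TreeFrame (M : PKripke) : Prop :=
  (∃ root : M.W, ∀ w, M.le root w) ∧
  ∀ w u v : M.W, M.le u w → M.le v w → (M.le u v ∨ M.le v u)

end PKripke

/-! ## First-order arithmetic -/

/-- terms of the language (S, +, ·, <, 0) (de Bruijn variables). -/
inductive ATerm : Type
  | var : ℕ → ATerm
  | zero : ATerm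
  | succ : ATerm → ATerm
  | add : ATerm → ATerm → ATerm
  | mul : ATerm → ATerm → ATerm
  deriving DecidableEq

namespace ATerm

def lift : ATerm → ℕ → ATerm
  | var n, d => if n < d then var n else var (n + 1)
  | zero, _ => zero
  | succ t, d => succ (t.lift d)
  | add t u, d => add (t.lift d) (u.lift d)
  | mul t u, d => mul (t.lift d) (u.lift d)

def subst : ATerm → ℕ → ATerm → ATerm
  | var n, k, s => if n < k then var n else if n = k then s else var (n - 1)
  | zero, _, _ => zero
  | succ t, k, s => succ (t.subst k s)
  | add t u, k, s => add (t.subst k s) (u.subst k s)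
  | mul t u, k, s => mul (t.subst k s) (u.subst k s)

/-- non-binding substitution: replace `var k` by `s`, leaving other variables alone. -/
def substId : ATerm → ℕ → ATerm → ATerm
  | var n, k, s => if n = k then s else var n
  | zero, _, _ => zero
  | succ t, k, s => succ (t.substId k s)
  | add t u, k, s => add (t.substId k s) (u.substId k s)
  | mul t u, k, s => mul (t.substId k s) (u.substId k s)

/-- all variables have index < k. -/
def vlt : ATerm → ℕ → Prop
  | var n, k => n < k
  | zero, _ => True
  | succ t, k => t.vlt k
  | add t u, k => t.vlt k ∧ u.vlt k
  | mul t u, k => t.vlt k ∧ u.vlt k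

/-- evaluation in the standard model ℕ. -/
def evalN : ATerm → (ℕ → ℕ) → ℕ
  | var n, ρ => ρ n
  | zero, _ => 0
  | succ t, ρ => t.evalN ρ + 1
  | add t u, ρ => t.evalN ρ + u.evalN ρ
  | mul t u, ρ => t.evalN ρ * u.evalN ρ

def fvB : ATerm → ℕ
  | var n => n + 1
  | zero => 0
  | succ t => t.fvB
  | add t u => max t.fvB u.fvB
  | mul t u => max t.fvB u.fvB

/-- a Gödel numbering of terms. -/
def code : ATerm → ℕ
  | var n => Nat.pair 0 n
  | zero => Nat.pair 1 0
  | succ t => Nat.pair 2 t.code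
  | add t u => Nat.pair 3 (Nat.pair t.code u.code)
  | mul t u => Nat.pair 4 (Nat.pair t.code u.code)

end ATerm

/-- the numeral of a natural number. -/
def numeral : ℕ → ATerm
  | 0 => .zero
  | n + 1 => .succ (numeral n)

/-- extend an environment by one value at index 0. -/
def econs {α : Sort*} (b : α) (ρ : ℕ → α) : ℕ → α
  | 0 => b
  | n + 1 => ρ n

/-- first-order formulas of arithmetic (de Bruijn variables). -/
inductive AForm : Type
  | eq : ATerm → ATerm → AForm
  | lt : ATerm → ATerm → AForm
  | fal : AForm
  | and : AForm → AForm → AForm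
  | or : AForm → AForm → AForm
  | imp : AForm → AForm → AForm
  | all : AForm → AForm
  | ex : AForm → AForm
  deriving DecidableEq

namespace AForm

def neg (A : AForm) : AForm := imp A fal

def iffA (A B : AForm) : AForm := and (imp A B) (imp B A)

def lift : AForm → ℕ → AForm
  | eq t u, d => eq (t.lift d) (u.lift d)
  | lt t u, d => lt (t.lift d) (u.lift d)
  | fal, _ => fal
  | and A B, d => and (A.lift d) (B.lift d)
  | or A B, d => or (A.lift d) (B.lift d)
  | imp A B, d => imp (A.lift d) (B.lift d)
  | all A, d => all (A.lift (d + 1))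
  | ex A, d => ex (A.lift (d + 1))

/-- capture-avoiding substitution of a term for variable `k` (instantiating a binder). -/
def subst : AForm → ℕ → ATerm → AForm
  | eq t u, k, s => eq (t.subst k s) (u.subst k s)
  | lt t u, k, s => lt (t.subst k s) (u.subst k s)
  | fal, _, _ => fal
  | and A B, k, s => and (A.subst k s) (B.subst k s)
  | or A B, k, s => or (A.subst k s) (B.subst k s)
  | imp A B, k, s => imp (A.subst k s) (B.subst k s)
  | all A, k, s => all (A.subst (k + 1) (s.lift 0))
  | ex A, k, s => ex (A.subst (k + 1) (s.lift 0))

/-- non-binding substitution: replace the free variable `k` by `s`. -/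
def substId : AForm → ℕ → ATerm → AForm
  | eq t u, k, s => eq (t.substId k s) (u.substId k s)
  | lt t u, k, s => lt (t.substId k s) (u.substId k s)
  | fal, _, _ => fal
  | and A B, k, s => and (A.substId k s) (B.substId k s)
  | or A B, k, s => or (A.substId k s) (B.substId k s)
  | imp A B, k, s => imp (A.substId k s) (B.substId k s)
  | all A, k, s => all (A.substId (k + 1) (s.lift 0))
  | ex A, k, s => ex (A.substId (k + 1) (s.lift 0))

/-- all free variables have index < k. -/
def vlt : AForm → ℕ → Prop
  | eq t u, k => t.vlt k ∧ u.vlt k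
  | lt t u, k => t.vlt k ∧ u.vlt k
  | fal, _ => True
  | and A B, k => A.vlt k ∧ B.vlt k
  | or A B, k => A.vlt k ∧ B.vlt k
  | imp A B, k => A.vlt k ∧ B.vlt k
  | all A, k => A.vlt (k + 1)
  | ex A, k => A.vlt (k + 1)

/-- a bound on the free variables of a formula. -/
def fvB : AForm → ℕ
  | eq t u => max t.fvB u.fvB
  | lt t u => max t.fvB u.fvB
  | fal => 0
  | and A B => max A.fvB B.fvB
  | or A B => max A.fvB B.fvB
  | imp A B => max A.fvB B.fvB
  | all A => A.fvB - 1
  | ex A => A.fvB - 1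

/-- classical (Tarskian) satisfaction in the standard model ℕ. -/
def SatN : AForm → (ℕ → ℕ) → Prop
  | eq t u, ρ => t.evalN ρ = u.evalN ρ
  | lt t u, ρ => t.evalN ρ < u.evalN ρ
  | fal, _ => False
  | and A B, ρ => A.SatN ρ ∧ B.SatN ρ
  | or A B, ρ => A.SatN ρ ∨ B.SatN ρ
  | imp A B, ρ => A.SatN ρ → B.SatN ρ
  | all A, ρ => ∀ n : ℕ, A.SatN (econs n ρ)
  | ex A, ρ => ∃ n : ℕ, A.SatN (econs n ρ)

/-- a Gödel numbering of arithmetic formulas. -/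
def code : AForm → ℕ
  | eq t u => Nat.pair 0 (Nat.pair t.code u.code)
  | lt t u => Nat.pair 1 (Nat.pair t.code u.code)
  | fal => Nat.pair 2 0
  | and A B => Nat.pair 3 (Nat.pair A.code B.code)
  | or A B => Nat.pair 4 (Nat.pair A.code B.code)
  | imp A B => Nat.pair 5 (Nat.pair A.code B.code)
  | all A => Nat.pair 6 A.code
  | ex A => Nat.pair 7 A.code

end AForm

/-- Δ₀ formulas: only bounded quantifiers. -/
inductive Delta0 : AForm → Prop
  | eq (t u) : Delta0 (.eq t u)
  | lt (t u) : Delta0 (.lt t u)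
  | fal : Delta0 .fal
  | and {A B} : Delta0 A → Delta0 B → Delta0 (.and A B)
  | or {A B} : Delta0 A → Delta0 B → Delta0 (.or A B)
  | imp {A B} : Delta0 A → Delta0 B → Delta0 (.imp A B)
  | ball (t : ATerm) {A} : Delta0 A → Delta0 (.all (.imp (.lt (.var 0) (t.lift 0)) A))
  | bex (t : ATerm) {A} : Delta0 A → Delta0 (.ex (.and (.lt (.var 0) (t.lift 0)) A))

/-- Σ₁ formulas: existential quantifiers over a Δ₀ matrix. -/
inductive Sigma1 : AForm → Prop
  | of_delta0 {A} : Delta0 A → Sigma1 A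
  | ex {A} : Sigma1 A → Sigma1 (.ex A)

/-- a Hilbert-style proof system for intuitionistic first-order logic with equality,
from a set `T` of (closed) non-logical axioms. -/
inductive Prf (T : AForm → Prop) : AForm → Prop
  | hyp {A} : T A → Prf T A
  | mp {A B} : Prf T (.imp A B) → Prf T A → Prf T B
  | gen {A} : Prf T A → Prf T (.all A)
  | k (A B) : Prf T (.imp A (.imp B A))
  | s (A B C) : Prf T (.imp (.imp A (.imp B C)) (.imp (.imp A B) (.imp A C)))
  | pair (A B) : Prf T (.imp A (.imp B (.and A B)))
  | fst (A B) : Prf T (.imp (.and A B) A)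
  | snd (A B) : Prf T (.imp (.and A B) B)
  | inl (A B) : Prf T (.imp A (.or A B))
  | inr (A B) : Prf T (.imp B (.or A B))
  | cases (A B C) : Prf T (.imp (.imp A C) (.imp (.imp B C) (.imp (.or A B) C)))
  | exfalso (A) : Prf T (.imp .fal A)
  | allE (A : AForm) (t : ATerm) : Prf T (.imp (.all A) (A.subst 0 t))
  | allShift (A B : AForm) : Prf T (.imp (.all (.imp (B.lift 0) A)) (.imp B (.all A)))
  | exI (A : AForm) (t : ATerm) : Prf T (.imp (A.subst 0 t) (.ex A))
  | exE (A B : AForm) : Prf T (.imp (.all (.imp A (B.lift 0))) (.imp (.ex A) B))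
  | eqRefl : Prf T (.all (.eq (.var 0) (.var 0)))
  | leibniz (A : AForm) : Prf T (.all (.all (.imp (.eq (.var 1) (.var 0))
      (.imp (((A.lift 1).lift 1).substId 0 (.var 1))
            (((A.lift 1).lift 1).substId 0 (.var 0))))))

/-- iterated universal quantification. -/
def ucAux : ℕ → AForm → AForm
  | 0, A => A
  | k + 1, A => ucAux k (.all A)

/-- universal closure. -/
def uc (A : AForm) : AForm := ucAux A.fvB A

/-- the induction axiom for the formula A (induction on variable 0). -/
def indAx (A : AForm) : AForm :=
  uc (.imp (.and (A.subst 0 .zero) (.all (.imp A (A.substId 0 (.succ (.var 0))))))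
      (.all A))

/-- the axioms Q1–Q8. -/
inductive QAx : AForm → Prop
  | q1 : QAx (.all (.imp (.eq (.succ (.var 0)) .zero) .fal))
  | q2 : QAx (.all (.all (.imp (.eq (.succ (.var 1)) (.succ (.var 0))) (.eq (.var 1) (.var 0)))))
  | q3 : QAx (.all (.or (.eq (.var 0) .zero) (.ex (.eq (.succ (.var 0)) (.var 1)))))
  | q4 : QAx (.all (.eq (.add (.var 0) .zero) (.var 0)))
  | q5 : QAx (.all (.all (.eq (.add (.var 1) (.succ (.var 0))) (.succ (.add (.var 1) (.var 0))))))
  | q6 : QAx (.all (.eq (.mul (.var 0) .zero) .zero))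
  | q7 : QAx (.all (.all (.eq (.mul (.var 1) (.succ (.var 0))) (.add (.mul (.var 1) (.var 0)) (.var 1)))))
  | q8 : QAx (.all (.all (AForm.iffA (.lt (.var 1) (.var 0))
      (.ex (.eq (.add (.var 2) (.succ (.var 0))) (.var 1))))))

/-- the axioms of Heyting Arithmetic: Q1–Q8 and full induction. -/
def HAAx : AForm → Prop := fun A => QAx A ∨ ∃ B : AForm, A = indAx B

/-- provability in HA. -/
def HAProves : AForm → Prop := Prf HAAx

/-- interface for the standard arithmetized provability predicate `Prov_HA` of HA:
`Pr A` is the Σ₁ sentence `Prov_HA(⌜A⌝)`. -/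
structure ProvPred where
  Pr : AForm → AForm
  sentence : ∀ A, (Pr A).vlt 0
  sigma1 : ∀ A, Sigma1 (Pr A)
  correct : ∀ A : AForm, ((Pr A).SatN (fun _ => 0) ↔ HAProves A)
  dNec : ∀ A, HAProves A → HAProves (Pr A)
  dK : ∀ A B, HAProves (.imp (Pr (.imp A B)) (.imp (Pr A) (Pr B)))
  dSigma : ∀ A, Sigma1 A → A.vlt 0 → HAProves (.imp A (Pr A))
  dLob : ∀ A, HAProves (.imp (Pr (.imp (Pr A) A)) (Pr A))

/-- the arithmetical interpretation `σ_HA` of modal formulas determined by a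
substitution `σ` and a provability predicate `Pr`. -/
def interp (Pr : AForm → AForm) (σ : ℕ → AForm) : Form → AForm
  | .var n => σ n
  | .bot => .fal
  | .and A B => .and (interp Pr σ A) (interp Pr σ B)
  | .or A B => .or (interp Pr σ A) (interp Pr σ B)
  | .imp A B => .imp (interp Pr σ A) (interp Pr σ B)
  | .box A => Pr (interp Pr σ A)

/-- σ is an arithmetical substitution: it maps atomic variables to sentences. -/
def ArithSubst (σ : ℕ → AForm) : Prop := ∀ n, (σ n).vlt 0

/-- σ is a Σ₁-substitution: it maps atomic variables to Σ₁ sentences. -/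
def Sigma1Subst (σ : ℕ → AForm) : Prop := ∀ n, Sigma1 (σ n) ∧ (σ n).vlt 0

/-! ## The theories HAₓ and indexed provability (for the refined Leivant principle) -/

/-- induction formulas of the special shape (A→B)→B with A, B ∈ Σ₁. -/
def shapeInd (A : AForm) : Prop := ∃ S Tf : AForm, Sigma1 S ∧ Sigma1 Tf ∧ A = .imp (.imp S Tf) Tf

/-- the axioms of HAₓ: Q1-Q8, and induction restricted to formulas of the shape
(A→B)→B with A,B ∈ Σ₁ or with Gödel number ≤ x. -/
def HAxAx (x : ℕ) : AForm → Prop := fun A =>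
  QAx A ∨ ∃ B : AForm, (shapeInd B ∨ B.code ≤ x) ∧ A = indAx B

/-- interface for the arithmetized bounded provability predicates `□ₓ`:
`PrB A` is the Σ₁ formula with free variable 0 expressing `Prov_{HA_{v₀}}(⌜A⌝)`, and
`PrBSub A` (for `A` with one free variable) is the Σ₁ formula with free variables 0, 1
expressing `Prov_{HA_{v₀}}(⌜A(v̇₁)⌝)`. -/
structure BddProvPred where
  PrB : AForm → AForm
  PrBSub : AForm → AForm
  PrB_vlt : ∀ A, (PrB A).vlt 1
  PrB_sigma1 : ∀ A, Sigma1 (PrB A)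
  PrB_correct : ∀ (A : AForm) (n : ℕ),
    ((PrB A).SatN (fun i => if i = 0 then n else 0) ↔ Prf (HAxAx n) A)
  PrBSub_vlt : ∀ A, (PrBSub A).vlt 2
  PrBSub_sigma1 : ∀ A, Sigma1 (PrBSub A)
  PrBSub_correct : ∀ (A : AForm) (n m : ℕ),
    ((PrBSub A).SatN (fun i => if i = 0 then n else m) ↔ Prf (HAxAx n) (A.subst 0 (numeral m)))

/-! ## First-order Kripke models of HA -/

/-- a first-order Kripke model for the language of arithmetic over the frame `(W, le)`:
each node carries a classical structure, and the structure at a smaller node is a weak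
substructure of the structure at a bigger one (realized as subsets of a common universe,
closed under the operations). -/
structure FOKripke (W : Type) (le : W → W → Prop) where
  U : Type
  dom : W → Set U
  zero : U
  succ : U → U
  add : U → U → U
  mul : U → U → U
  ltR : U → U → Prop
  dom_mono : ∀ {a b : W}, le a b → dom a ⊆ dom b
  zero_mem : ∀ a, zero ∈ dom a
  succ_mem : ∀ a x, x ∈ dom a → succ x ∈ dom a
  add_mem : ∀ a x y, x ∈ dom a → y ∈ dom a → add x y ∈ dom a
  mul_mem : ∀ a x y, x ∈ dom a → y ∈ dom a → mul x y ∈ dom a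

/-- evaluation of a term in a first-order Kripke model. -/
def tevalK {W : Type} {le : W → W → Prop} (M : FOKripke W le) (ρ : ℕ → M.U) : ATerm → M.U
  | .var n => ρ n
  | .zero => M.zero
  | .succ t => M.succ (tevalK M ρ t)
  | .add t u => M.add (tevalK M ρ t) (tevalK M ρ u)
  | .mul t u => M.mul (tevalK M ρ t) (tevalK M ρ u)

/-- the forcing relation of a first-order Kripke model. -/
def FOForces {W : Type} {le : W → W → Prop} (M : FOKripke W le) :
    AForm → W → (ℕ → M.U) → Prop
  | .eq t u, _, ρ => tevalK M ρ t = tevalK M ρ u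
  | .lt t u, _, ρ => M.ltR (tevalK M ρ t) (tevalK M ρ u)
  | .fal, _, _ => False
  | .and A B, w, ρ => FOForces M A w ρ ∧ FOForces M B w ρ
  | .or A B, w, ρ => FOForces M A w ρ ∨ FOForces M B w ρ
  | .imp A B, w, ρ => ∀ v, le w v → FOForces M A v ρ → FOForces M B v ρ
  | .all A, w, ρ => ∀ v, le w v → ∀ b ∈ M.dom v, FOForces M A v (econs b ρ)
  | .ex A, w, ρ => ∃ b ∈ M.dom w, FOForces M A w (econs b ρ)

/-- the Kripke model forces all axioms of HA. -/
def ForcesHA {W : Type} {le : W → W → Prop} (M : FOKripke W le) : Prop :=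
  ∀ A : AForm, HAAx A → ∀ w : W, FOForces M A w (fun _ => M.zero)

end PLHA

namespace PLHA

/-! ### Auxiliary development for the proof of Statement 5 -/

namespace LCC

/-- Derivations from a set of hypotheses over LC. -/
inductive Der (Γ : Set Form) : Form → Prop
  | hyp {A} : A ∈ Γ → Der Γ A
  | thm {A} : LCProves A → Der Γ A
  | mp {A B} : Der Γ (.imp A B) → Der Γ A → Der Γ B

lemma lc_ipc {A : Form} (h : IpcAx A) : LCProves A := Proves.ipc h

lemma lc_impId (A : Form) : LCProves (.imp A A) :=
  Proves.mp (Proves.mp (Proves.ipc (IpcAx.a2 A (.imp A A) A)) (Proves.ipc (IpcAx.a1 A (.imp A A))))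
    (Proves.ipc (IpcAx.a1 A A))

lemma Der.mono {Γ Δ : Set Form} {B : Form} (hsub : Γ ⊆ Δ) (h : Der Γ B) : Der Δ B := by
  induction h with
  | hyp h => exact Der.hyp (hsub h)
  | thm h => exact Der.thm h
  | mp _ _ ih1 ih2 => exact Der.mp ih1 ih2

lemma Der.ded {Γ : Set Form} {A B : Form} (h : Der (insert A Γ) B) : Der Γ (.imp A B) := by
  induction h with
  | @hyp C h =>
    rcases Set.mem_insert_iff.mp h with rfl | h
    · exact Der.thm (lc_impId _)
    · exact Der.mp (Der.thm (lc_ipc (IpcAx.a1 C A))) (Der.hyp h)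
  | @thm C h => exact Der.mp (Der.thm (lc_ipc (IpcAx.a1 C A))) (Der.thm h)
  | @mp C D _ _ ih1 ih2 =>
    exact Der.mp (Der.mp (Der.thm (lc_ipc (IpcAx.a2 A C D))) ih1) ih2

lemma Der.cut {Θ Γ : Set Form} {B : Form} (h : Der Θ B) (hall : ∀ E ∈ Θ, Der Γ E) :
    Der Γ B := by
  induction h with
  | hyp h => exact hall _ h
  | thm h => exact Der.thm h
  | mp _ _ ih1 ih2 => exact Der.mp ih1 ih2

lemma Der.boxed {Γ : Set Form} {B : Form} (h : Der Γ B) :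
    Der (Form.box '' Γ) (.box B) := by
  induction h with
  | hyp h => exact Der.hyp ⟨_, h, rfl⟩
  | thm h => exact Der.thm (Proves.nec rfl h)
  | @mp C D _ _ ih1 ih2 =>
    exact Der.mp (Der.mp (Der.thm (Proves.ax (Or.inl (GLAx.k C D)))) ih1) ih2

lemma Der.toLC {B : Form} (h : Der ∅ B) : LCProves B := by
  induction h with
  | hyp h => exact absurd h (Set.notMem_empty _)
  | thm h => exact h
  | mp _ _ ih1 ih2 => exact Proves.mp ih1 ih2

lemma Der.andI {Γ : Set Form} {A B : Form} (h1 : Der Γ A) (h2 : Der Γ B) :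
    Der Γ (.and A B) :=
  Der.mp (Der.mp (Der.thm (lc_ipc (IpcAx.a3 A B))) h1) h2

lemma Der.andL {Γ : Set Form} {A B : Form} (h : Der Γ (.and A B)) : Der Γ A :=
  Der.mp (Der.thm (lc_ipc (IpcAx.a4 A B))) h

lemma Der.andR {Γ : Set Form} {A B : Form} (h : Der Γ (.and A B)) : Der Γ B :=
  Der.mp (Der.thm (lc_ipc (IpcAx.a5 A B))) h

lemma Der.orI1 {Γ : Set Form} {A : Form} (B : Form) (h : Der Γ A) : Der Γ (.or A B) :=
  Der.mp (Der.thm (lc_ipc (IpcAx.a6 A B))) h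

lemma Der.orI2 {Γ : Set Form} {B : Form} (A : Form) (h : Der Γ B) : Der Γ (.or A B) :=
  Der.mp (Der.thm (lc_ipc (IpcAx.a7 A B))) h

lemma Der.orE {Γ : Set Form} {A B C : Form} (h : Der Γ (.or A B))
    (h1 : Der Γ (.imp A C)) (h2 : Der Γ (.imp B C)) : Der Γ C :=
  Der.mp (Der.mp (Der.mp (Der.thm (lc_ipc (IpcAx.a8 A B C))) h1) h2) h

lemma Der.exfalso {Γ : Set Form} (B : Form) (h : Der Γ .bot) : Der Γ B :=
  Der.mp (Der.thm (lc_ipc (IpcAx.a9 B))) h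


/-! ### Subformulas -/

def subf : Form → Finset Form
  | .var n => {.var n}
  | .bot => {.bot}
  | .and A B => insert (.and A B) (subf A ∪ subf B)
  | .or A B => insert (.or A B) (subf A ∪ subf B)
  | .imp A B => insert (.imp A B) (subf A ∪ subf B)
  | .box A => insert (.box A) (subf A)

lemma mem_subf_self : ∀ A : Form, A ∈ subf A
  | .var n => by simp [subf]
  | .bot => by simp [subf]
  | .and A B => by simp [subf]
  | .or A B => by simp [subf]
  | .imp A B => by simp [subf]
  | .box A => by simp [subf]

lemma subf_closed : ∀ A : Form, ∀ B ∈ subf A, subf B ⊆ subf A := by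
  intro A
  induction A with
  | var n => intro B hB; simp [subf] at hB; subst hB; simp [subf]
  | bot => intro B hB; simp [subf] at hB; subst hB; simp [subf]
  | and A B ihA ihB =>
    intro C hC; rw [subf, Finset.mem_insert, Finset.mem_union] at hC
    rcases hC with rfl | h | h
    · exact subset_rfl
    · exact (ihA C h).trans (by rw [subf]; exact (Finset.subset_union_left).trans (Finset.subset_insert _ _))
    · exact (ihB C h).trans (by rw [subf]; exact (Finset.subset_union_right).trans (Finset.subset_insert _ _))
  | or A B ihA ihB =>
    intro C hC; rw [subf, Finset.mem_insert, Finset.mem_union] at hC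
    rcases hC with rfl | h | h
    · exact subset_rfl
    · exact (ihA C h).trans (by rw [subf]; exact (Finset.subset_union_left).trans (Finset.subset_insert _ _))
    · exact (ihB C h).trans (by rw [subf]; exact (Finset.subset_union_right).trans (Finset.subset_insert _ _))
  | imp A B ihA ihB =>
    intro C hC; rw [subf, Finset.mem_insert, Finset.mem_union] at hC
    rcases hC with rfl | h | h
    · exact subset_rfl
    · exact (ihA C h).trans (by rw [subf]; exact (Finset.subset_union_left).trans (Finset.subset_insert _ _))
    · exact (ihB C h).trans (by rw [subf]; exact (Finset.subset_union_right).trans (Finset.subset_insert _ _))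
  | box A ihA =>
    intro C hC; rw [subf, Finset.mem_insert] at hC
    rcases hC with rfl | h
    · exact subset_rfl
    · exact (ihA C h).trans (by rw [subf]; exact Finset.subset_insert _ _)

/-- S is closed under subformulas. -/
def SubC (S : Finset Form) : Prop := ∀ B ∈ S, subf B ⊆ S

lemma SubC.and_left {S : Finset Form} (hS : SubC S) {A B : Form} (h : Form.and A B ∈ S) : A ∈ S :=
  hS _ h (by rw [subf]; exact Finset.mem_insert_of_mem (Finset.mem_union_left _ (mem_subf_self A)))
lemma SubC.and_right {S : Finset Form} (hS : SubC S) {A B : Form} (h : Form.and A B ∈ S) : B ∈ S :=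
  hS _ h (by rw [subf]; exact Finset.mem_insert_of_mem (Finset.mem_union_right _ (mem_subf_self B)))
lemma SubC.or_left {S : Finset Form} (hS : SubC S) {A B : Form} (h : Form.or A B ∈ S) : A ∈ S :=
  hS _ h (by rw [subf]; exact Finset.mem_insert_of_mem (Finset.mem_union_left _ (mem_subf_self A)))
lemma SubC.or_right {S : Finset Form} (hS : SubC S) {A B : Form} (h : Form.or A B ∈ S) : B ∈ S :=
  hS _ h (by rw [subf]; exact Finset.mem_insert_of_mem (Finset.mem_union_right _ (mem_subf_self B)))
lemma SubC.imp_left {S : Finset Form} (hS : SubC S) {A B : Form} (h : Form.imp A B ∈ S) : A ∈ S :=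
  hS _ h (by rw [subf]; exact Finset.mem_insert_of_mem (Finset.mem_union_left _ (mem_subf_self A)))
lemma SubC.imp_right {S : Finset Form} (hS : SubC S) {A B : Form} (h : Form.imp A B ∈ S) : B ∈ S :=
  hS _ h (by rw [subf]; exact Finset.mem_insert_of_mem (Finset.mem_union_right _ (mem_subf_self B)))
lemma SubC.box_sub {S : Finset Form} (hS : SubC S) {A : Form} (h : Form.box A ∈ S) : A ∈ S :=
  hS _ h (by rw [subf]; exact Finset.mem_insert_of_mem (mem_subf_self A))

/-! ### Nodes of the canonical model -/

structure Node (S : Finset Form) where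
  Γ : Finset Form
  sub : Γ ⊆ S
  closed : ∀ C ∈ S, Der ↑Γ C → C ∈ Γ
  prime : ∀ C D : Form, Form.or C D ∈ Γ → C ∈ Γ ∨ D ∈ Γ
  cons : ¬ Der ↑Γ .bot

lemma Node.eq {S : Finset Form} {n m : Node S} (h : n.Γ = m.Γ) : n = m := by
  cases n; cases m; simp_all

instance {S : Finset Form} : Finite (Node S) := by
  apply Finite.of_injective
    (fun n : Node S => (⟨n.Γ, Finset.mem_powerset.mpr n.sub⟩ : {x // x ∈ S.powerset}))
  intro n m h
  exact Node.eq (congrArg Subtype.val h)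

lemma lindenbaum {S : Finset Form} (hS : SubC S) (Γ0 : Finset Form)
    (hsub : Γ0 ⊆ S) (B : Form) (h : ¬ Der ↑Γ0 B) :
    ∃ n : Node S, Γ0 ⊆ n.Γ ∧ ¬ Der ↑n.Γ B := by
  classical
  set t := S.powerset.filter (fun Δ => Γ0 ⊆ Δ ∧ ¬ Der ↑Δ B) with ht
  have hne : t.Nonempty := ⟨Γ0, by simp [ht, hsub, h]⟩
  obtain ⟨Δ, hΔt, hmax⟩ := t.exists_max_image Finset.card hne
  rw [ht, Finset.mem_filter, Finset.mem_powerset] at hΔt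
  obtain ⟨hΔS, hΓ0Δ, hnd⟩ := hΔt
  have key : ∀ C ∈ S, C ∉ Δ → Der (insert C ↑Δ) B := by
    intro C hCS hCΔ
    by_contra hno
    have hmem : insert C Δ ∈ t := by
      rw [ht, Finset.mem_filter, Finset.mem_powerset]
      refine ⟨Finset.insert_subset hCS hΔS, hΓ0Δ.trans (Finset.subset_insert _ _), ?_⟩
      rw [Finset.coe_insert]; exact hno
    have := hmax _ hmem
    rw [Finset.card_insert_of_notMem hCΔ] at this
    omega
  refine ⟨⟨Δ, hΔS, ?_, ?_, ?_⟩, hΓ0Δ, hnd⟩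
  · intro C hCS hder
    by_contra hC
    exact hnd (Der.mp (key C hCS hC).ded hder)
  · intro C D hor
    by_contra hboth
    push_neg at hboth
    have hCS : C ∈ S := hS.or_left (hΔS hor)
    have hDS : D ∈ S := hS.or_right (hΔS hor)
    exact hnd (Der.orE (Der.hyp hor) (key C hCS hboth.1).ded (key D hDS hboth.2).ded)
  · intro hbot; exact hnd (hbot.exfalso B)

/-! ### The canonical model -/

def canonR (S : Finset Form) (n m : Node S) : Prop :=
  n.Γ ⊆ m.Γ ∧ (∀ C, Form.box C ∈ n.Γ → C ∈ m.Γ) ∧ ∃ C, Form.box C ∈ m.Γ ∧ Form.box C ∉ n.Γ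

def canon (S : Finset Form) : PKripke where
  W := Node S
  le n m := n.Γ ⊆ m.Γ
  r := canonR S
  V n k := Form.var k ∈ n.Γ
  le_refl n := subset_rfl
  le_trans h1 h2 := h1.trans h2
  le_antisymm h1 h2 := Node.eq (Finset.Subset.antisymm h1 h2)
  le_r {a b c} h1 h2 :=
    ⟨h1.trans h2.1, fun C hC => h2.2.1 C (h1 hC),
      let ⟨C, h3, h4⟩ := h2.2.2; ⟨C, h3, fun hc => h4 (h1 hc)⟩⟩
  mono h1 h2 := h1 h2

def boxInv (Γ : Finset Form) : Finset Form :=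
  Γ.biUnion fun F => match F with | .box C => {C} | _ => ∅

lemma mem_boxInv {Γ : Finset Form} {C : Form} : C ∈ boxInv Γ ↔ Form.box C ∈ Γ := by
  rw [boxInv, Finset.mem_biUnion]
  constructor
  · rintro ⟨F, hF, hC⟩
    cases F <;> simp_all
  · intro h; exact ⟨.box C, h, by simp⟩

lemma box_lemma {S : Finset Form} (hS : SubC S) (n : Node S) (B : Form)
    (hBS : Form.box B ∈ S) (hB : Form.box B ∉ n.Γ) :
    ∃ m : Node S, canonR S n m ∧ B ∉ m.Γ := by
  classical
  set Δ0 : Finset Form := insert (.box B) (n.Γ ∪ boxInv n.Γ) with hΔ0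
  have hΔ0S : Δ0 ⊆ S := by
    intro C hC
    rw [hΔ0, Finset.mem_insert, Finset.mem_union] at hC
    rcases hC with rfl | h | h
    · exact hBS
    · exact n.sub h
    · exact hS.box_sub (n.sub (mem_boxInv.mp h))
  have hnd : ¬ Der ↑Δ0 B := by
    intro hd
    have h1 : Der ↑(n.Γ ∪ boxInv n.Γ) (.imp (.box B) B) := by
      apply Der.ded
      rw [← Finset.coe_insert, ← hΔ0]; exact hd
    have h3 : Der (Form.box '' ↑(n.Γ ∪ boxInv n.Γ)) (.box B) :=
      Der.mp (Der.thm (Proves.ax (Or.inl (GLAx.lob B)))) h1.boxed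
    have h4 : Der ↑n.Γ (.box B) := by
      apply h3.cut
      rintro E ⟨G, hG, rfl⟩
      rw [Finset.mem_coe, Finset.mem_union] at hG
      rcases hG with hG | hG
      · exact Der.mp (Der.thm (Proves.ax (Or.inr ⟨G, rfl⟩))) (Der.hyp hG)
      · exact Der.hyp (mem_boxInv.mp hG)
    exact hB (n.closed _ hBS h4)
  obtain ⟨m, hm1, hm2⟩ := lindenbaum hS Δ0 hΔ0S B hnd
  have hsub0 : n.Γ ⊆ Δ0 := (Finset.subset_union_left).trans (Finset.subset_insert _ _)
  refine ⟨m, ⟨hsub0.trans hm1, ?_, B, ?_, hB⟩, ?_⟩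
  · intro C hC
    exact hm1 (((Finset.subset_union_right).trans (Finset.subset_insert _ _)) (mem_boxInv.mpr hC))
  · exact hm1 (Finset.mem_insert_self _ _)
  · intro hBm
    exact hm2 (Der.hyp hBm)

/-! ### Truth lemma -/

theorem truth {S : Finset Form} (hS : SubC S) :
    ∀ B, B ∈ S → ∀ n : Node S, (pforces (canon S) B n ↔ B ∈ n.Γ) := by
  intro B
  induction B with
  | var k => intro _ n; exact Iff.rfl
  | bot =>
    intro _ n
    simp only [pforces]
    exact ⟨fun h => h.elim, fun h => n.cons (Der.hyp h)⟩
  | and A B ihA ihB =>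
    intro hmem n
    simp only [pforces]
    constructor
    · rintro ⟨hA, hB⟩
      exact n.closed _ hmem
        (Der.andI (Der.hyp ((ihA (hS.and_left hmem) n).mp hA))
          (Der.hyp ((ihB (hS.and_right hmem) n).mp hB)))
    · intro h
      refine ⟨(ihA (hS.and_left hmem) n).mpr ?_, (ihB (hS.and_right hmem) n).mpr ?_⟩
      · exact n.closed _ (hS.and_left hmem) (Der.andL (Der.hyp h))
      · exact n.closed _ (hS.and_right hmem) (Der.andR (Der.hyp h))
  | or A B ihA ihB =>
    intro hmem n
    simp only [pforces]
    constructor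
    · rintro (hA | hB)
      · exact n.closed _ hmem (Der.orI1 B (Der.hyp ((ihA (hS.or_left hmem) n).mp hA)))
      · exact n.closed _ hmem (Der.orI2 A (Der.hyp ((ihB (hS.or_right hmem) n).mp hB)))
    · intro h
      rcases n.prime _ _ h with hA | hB
      · exact Or.inl ((ihA (hS.or_left hmem) n).mpr hA)
      · exact Or.inr ((ihB (hS.or_right hmem) n).mpr hB)
  | imp A B ihA ihB =>
    intro hmem n
    simp only [pforces]
    constructor
    · intro hf
      by_contra hni
      have hnd : ¬ Der (insert A ↑n.Γ) B := by
        intro hd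
        exact hni (n.closed _ hmem hd.ded)
      rw [← Finset.coe_insert] at hnd
      obtain ⟨m, hm1, hm2⟩ := lindenbaum hS (insert A n.Γ) (Finset.insert_subset (hS.imp_left hmem) n.sub) B hnd
      have hnm : n.Γ ⊆ m.Γ := (Finset.subset_insert _ _).trans hm1
      have hAm : pforces (canon S) A m :=
        (ihA (hS.imp_left hmem) m).mpr (hm1 (Finset.mem_insert_self _ _))
      have hBm := (ihB (hS.imp_right hmem) m).mp (hf m hnm hAm)
      exact hm2 (Der.hyp hBm)
    · intro h m hnm hAm
      have hAmem := (ihA (hS.imp_left hmem) m).mp hAm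
      refine (ihB (hS.imp_right hmem) m).mpr ?_
      exact m.closed _ (hS.imp_right hmem) (Der.mp (Der.hyp (hnm h)) (Der.hyp hAmem))
  | box A ihA =>
    intro hmem n
    simp only [pforces]
    constructor
    · intro hf
      by_contra hni
      obtain ⟨m, hr, hA⟩ := box_lemma hS n A hmem hni
      exact hA ((ihA (hS.box_sub hmem) m).mp (hf m hr))
    · intro h m hr
      exact (ihA (hS.box_sub hmem) m).mpr (hr.2.1 A h)

/-! ### Soundness -/

lemma pforces_mono {M : PKripke} {A : Form} : ∀ {w v : M.W},
    M.le w v → pforces M A w → pforces M A v := by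
  induction A with
  | var k => intro w v h hf; exact M.mono h hf
  | bot => intro w v h hf; exact hf.elim
  | and A B ihA ihB => intro w v h hf; exact ⟨ihA h hf.1, ihB h hf.2⟩
  | or A B ihA ihB =>
    intro w v h hf
    rcases hf with hf | hf
    · exact Or.inl (ihA h hf)
    · exact Or.inr (ihB h hf)
  | imp A B ihA ihB =>
    intro w v h hf u hu hA
    exact hf u (M.le_trans h hu) hA
  | box A ihA =>
    intro w v h hf u hu
    exact hf u (M.le_r h hu)

lemma sound_ipc {M : PKripke} {F : Form} (h : IpcAx F) : ∀ w : M.W, pforces M F w := by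
  cases h with
  | a1 A B => intro w v _ hA u hu _; exact pforces_mono hu hA
  | a2 A B C =>
    intro w v _ h1 u hu h2 t ht hA
    exact h1 t (M.le_trans hu ht) hA t (M.le_refl t) (h2 t ht hA)
  | a3 A B => intro w v _ hA u hu hB; exact ⟨pforces_mono hu hA, hB⟩
  | a4 A B => intro w v _ h; exact h.1
  | a5 A B => intro w v _ h; exact h.2
  | a6 A B => intro w v _ h; exact Or.inl h
  | a7 A B => intro w v _ h; exact Or.inr h
  | a8 A B C =>
    intro w v _ h1 u hu h2 t ht h3
    rcases h3 with hA | hB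
    · exact h1 t (M.le_trans hu ht) hA
    · exact h2 t ht hB
  | a9 A => intro w v _ h; exact h.elim

lemma soundness {A : Form} (h : LCProves A) (M : PKripke) (hP : M.Perfect) :
    ∀ w : M.W, pforces M A w := by
  induction h with
  | @ax F hax =>
    rcases hax with hgl | hcp
    · cases hgl with
      | k A B =>
        intro w v _ h1 u hu h2 t ht
        exact h1 t (M.le_r hu ht) t (M.le_refl t) (h2 t ht)
      | four A =>
        intro w v _ h1 u hu t ht
        exact h1 t (M.le_r (hP.2.2 hu).1 ht)
      | lob A =>
        intro w v _ h1
        exact fun u hu =>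
          hP.2.1.induction (C := fun u => M.r v u → pforces M A u) u
            (fun x ih hrvx =>
              h1 x hrvx x (M.le_refl x)
                (fun y hrxy => ih y hrxy (M.le_r (hP.2.2 hrvx).1 hrxy))) hu
    · obtain ⟨B, rfl⟩ := hcp
      intro w v _ hB u hu
      exact pforces_mono (hP.2.2 hu).1 hB
  | ipc hax => exact sound_ipc hax
  | mp _ _ ih1 ih2 => intro w; exact ih1 w w (M.le_refl w) (ih2 w)
  | nec _ _ ih => intro w v _; exact ih v

/-! ### Perfectness of the canonical model -/

lemma canon_perfect {S : Finset Form} (hS : SubC S) : (canon S).Perfect := by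
  refine ⟨?_, ?_, ?_⟩
  · intro a b c h1 h2
    exact ⟨h1.1.trans h2, fun C hC => h2 (h1.2.1 C hC),
      let ⟨C, hc1, hc2⟩ := h1.2.2; ⟨C, h2 hc1, hc2⟩⟩
  · have hb : ∀ n : Node S, boxInv n.Γ ⊆ S := fun n C hC => hS.box_sub (n.sub (mem_boxInv.mp hC))
    have hmeas : ∀ {a b : Node S}, canonR S a b → (boxInv a.Γ).card < (boxInv b.Γ).card := by
      intro a b h
      obtain ⟨hsub, _, C, hC1, hC2⟩ := h
      apply Finset.card_lt_card
      constructor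
      · intro D hD; exact mem_boxInv.mpr (hsub (mem_boxInv.mp hD))
      · intro hcon
        exact hC2 (mem_boxInv.mp (hcon (mem_boxInv.mpr hC1)))
    show WellFounded (fun a b : Node S => canonR S b a)
    refine Subrelation.wf (r := InvImage (· < ·) (fun n : Node S => S.card - (boxInv n.Γ).card)) ?_
      (InvImage.wf _ (wellFounded_lt))
    intro a b h
    have h1 := hmeas h
    have h2 := Finset.card_le_card (hb a)
    exact Nat.sub_lt_sub_left (lt_of_lt_of_le h1 h2) h1
  · intro a b h
    refine ⟨h.1, fun heq => ?_⟩
    obtain ⟨C, h1, h2⟩ := h.2.2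
    subst heq
    exact h2 h1

/-! ### Tree unraveling -/

def slt (M : PKripke) (a b : M.W) : Prop := M.le a b ∧ a ≠ b

def TW (M : PKripke) (w₀ : M.W) : Type :=
  {l : List M.W // l ≠ [] ∧ l.head? = some w₀ ∧ l.Chain' (slt M)}

lemma chain_le_last (M : PKripke) :
    ∀ (l : List M.W), l.Chain' (slt M) → ∀ (h : l ≠ []), M.le (l.head h) (l.getLast h)
  | [], _, h => absurd rfl h
  | [a], _, _ => M.le_refl a
  | a :: b :: t, hc, _ => by
    change List.IsChain _ _ at hc
    rw [List.isChain_cons_cons] at hc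
    have := chain_le_last M (b :: t) hc.2 (by simp)
    rw [List.head_cons, List.getLast_cons (by simp : (b :: t : List M.W) ≠ [])]
    exact M.le_trans hc.1.1 this

lemma prefix_last_le (M : PKripke) {l l' : List M.W} (hl : l ≠ []) (hl' : l' ≠ [])
    (hc : l'.Chain' (slt M)) (hp : l <+: l') :
    M.le (l.getLast hl) (l'.getLast hl') := by
  obtain ⟨t, rfl⟩ := hp
  rcases eq_or_ne t [] with rfl | ht
  · have : (l ++ []).getLast hl' = l.getLast hl := by simp
    rw [this]; exact M.le_refl _
  · change List.IsChain _ _ at hc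
    rw [List.isChain_append] at hc
    have h1 : slt M (l.getLast hl) (t.head ht) :=
      hc.2.2 _ (Option.mem_def.mpr (List.getLast?_eq_getLast hl)) _
        (Option.mem_def.mpr (List.head?_eq_head ht))
    have h2 := chain_le_last M t hc.2.1 ht
    have h3 : (l ++ t).getLast hl' = t.getLast ht := by
      rw [List.getLast_append, dif_neg (by simpa using ht)]
    rw [h3]
    exact M.le_trans h1.1 h2

def treeM (M : PKripke) (w₀ : M.W) : PKripke where
  W := TW M w₀
  le p q := p.1 <+: q.1
  r p q := p.1 <+: q.1 ∧ M.r (p.1.getLast p.2.1) (q.1.getLast q.2.1)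
  V p k := M.V (p.1.getLast p.2.1) k
  le_refl p := List.prefix_refl _
  le_trans h1 h2 := h1.trans h2
  le_antisymm h1 h2 := Subtype.ext (h1.eq_of_length (le_antisymm h1.length_le h2.length_le))
  le_r {a b c} h1 h2 := ⟨h1.trans h2.1, M.le_r (prefix_last_le M a.2.1 b.2.1 b.2.2.2 h1) h2.2⟩
  mono {a b k} h1 h2 := M.mono (prefix_last_le M a.2.1 b.2.1 b.2.2.2 h1) h2

lemma treeM_perfect (M : PKripke) (hP : M.Perfect) (w₀ : M.W) : (treeM M w₀).Perfect := by
  refine ⟨?_, ?_, ?_⟩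
  · intro a b c h1 h2
    exact ⟨h1.1.trans h2, hP.1 h1.2 (prefix_last_le M b.2.1 c.2.1 c.2.2.2 h2)⟩
  · show WellFounded (fun a b : TW M w₀ => (treeM M w₀).r b a)
    refine Subrelation.wf
      (r := InvImage (fun a b => M.r b a) (fun p : TW M w₀ => p.1.getLast p.2.1)) ?_
      (InvImage.wf _ hP.2.1)
    intro a b h
    exact h.2
  · intro a b h
    refine ⟨h.1, fun heq => ?_⟩
    have := (hP.2.2 h.2).2
    rw [heq] at this
    exact this rfl

lemma treeM_tree (M : PKripke) (w₀ : M.W) : (treeM M w₀).TreeFrame := by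
  constructor
  · refine ⟨⟨[w₀], by simp, rfl, List.isChain_singleton w₀⟩, ?_⟩
    intro w
    obtain ⟨l, hne, hhd, _⟩ := w
    cases l with
    | nil => exact absurd rfl hne
    | cons a t =>
      have : a = w₀ := by simpa using hhd
      subst this
      exact ⟨t, rfl⟩
  · intro w u v h1 h2
    exact List.prefix_or_prefix_of_prefix h1 h2

lemma treeM_finite (M : PKripke) [hFin : Finite M.W] (w₀ : M.W) : Finite (TW M w₀) := by
  classical
  haveI := Fintype.ofFinite M.W
  haveI := (List.finite_length_le M.W (Fintype.card M.W)).to_subtype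
  apply Finite.of_injective
    (fun p : TW M w₀ => (⟨p.1, by
      haveI : IsTrans M.W (slt M) := ⟨fun a b c h1 h2 =>
        ⟨M.le_trans h1.1 h2.1, fun hac => h2.2 (M.le_antisymm h2.1 (hac ▸ h1.1))⟩⟩
      haveI : IsIrrefl M.W (slt M) := ⟨fun a h => h.2 rfl⟩
      exact ((List.isChain_iff_pairwise.mp p.2.2.2).nodup).length_le_card⟩ :
        {l : List M.W // l ∈ {l : List M.W | l.length ≤ Fintype.card M.W}}))
  intro p q h
  exact Subtype.ext (Subtype.mk_eq_mk.mp h)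

lemma tree_forces (M : PKripke) (hP : M.Perfect) (w₀ : M.W) :
    ∀ (B : Form) (p : TW M w₀),
      pforces (treeM M w₀) B p ↔ pforces M B (p.1.getLast p.2.1) := by
  intro B
  induction B with
  | var k => intro p; exact Iff.rfl
  | bot => intro p; exact Iff.rfl
  | and A B ihA ihB => intro p; simp only [pforces]; rw [ihA, ihB]
  | or A B ihA ihB => intro p; simp only [pforces]; rw [ihA, ihB]
  | imp A B ihA ihB =>
    intro p
    simp only [pforces]
    constructor
    · intro hf v hv hA
      rcases eq_or_ne (p.1.getLast p.2.1) v with rfl | hne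
      · exact (ihB p).mp (hf p (List.prefix_refl _) ((ihA p).mpr hA))
      · have hch : (p.1 ++ [v]).Chain' (slt M) := by
          show List.IsChain _ _
          rw [List.isChain_append]
          refine ⟨p.2.2.2, List.isChain_singleton v, ?_⟩
          intro x hx y hy
          rw [Option.mem_def, List.getLast?_eq_getLast p.2.1, Option.some.injEq] at hx
          rw [Option.mem_def, List.head?_cons, Option.some.injEq] at hy
          subst hx; subst hy
          exact ⟨hv, hne⟩
        have hqh : (p.1 ++ [v]).head? = some w₀ := by
          rw [List.head?_append, p.2.2.1]; rfl
        let q : TW M w₀ := ⟨p.1 ++ [v], by simp, hqh, hch⟩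
        have hlast : q.1.getLast q.2.1 = v := List.getLast_concat
        have hforced := hf q ⟨[v], rfl⟩ ((ihA q).mpr (by rw [hlast]; exact hA))
        have := (ihB q).mp hforced
        rwa [hlast] at this
    · intro hf q hq hA
      exact (ihB q).mpr (hf _ (prefix_last_le M p.2.1 q.2.1 q.2.2.2 hq) ((ihA q).mp hA))
  | box A ihA =>
    intro p
    simp only [pforces]
    constructor
    · intro hf v hrv
      have hlt := hP.2.2 hrv
      have hch : (p.1 ++ [v]).Chain' (slt M) := by
        show List.IsChain _ _
        rw [List.isChain_append]
        refine ⟨p.2.2.2, List.isChain_singleton v, ?_⟩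
        intro x hx y hy
        rw [Option.mem_def, List.getLast?_eq_getLast p.2.1, Option.some.injEq] at hx
        rw [Option.mem_def, List.head?_cons, Option.some.injEq] at hy
        subst hx; subst hy
        exact hlt
      have hqh : (p.1 ++ [v]).head? = some w₀ := by
        rw [List.head?_append, p.2.2.1]; rfl
      let q : TW M w₀ := ⟨p.1 ++ [v], by simp, hqh, hch⟩
      have hlast : q.1.getLast q.2.1 = v := List.getLast_concat
      have hforced := hf q ⟨⟨[v], rfl⟩, by rw [hlast]; exact hrv⟩
      have := (ihA q).mp hforced
      rwa [hlast] at this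
    · intro hf q hrq
      exact (ihA q).mpr (hf _ hrq.2)

end LCC

/-- LC is sound and complete with respect to finite perfect Kripke
models with tree frames. -/
theorem LC_kripke_sound_complete (A : Form) :
    LCProves A ↔
      ∀ M : PKripke, Finite M.W → M.Perfect → M.TreeFrame → ∀ w : M.W, pforces M A w := by
  constructor
  · intro h M _ hP _ w
    exact LCC.soundness h M hP w
  · intro h
    by_contra hn
    have hS : LCC.SubC (LCC.subf A) := LCC.subf_closed A
    have hnd : ¬ LCC.Der ↑(∅ : Finset Form) A := by
      rw [Finset.coe_empty]
      intro hd
      exact hn hd.toLC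
    obtain ⟨n, -, hnA⟩ := LCC.lindenbaum hS ∅ (Finset.empty_subset _) A hnd
    have hAn : A ∉ n.Γ := fun hA => hnA (LCC.Der.hyp hA)
    have hcp : (LCC.canon (LCC.subf A)).Perfect := LCC.canon_perfect hS
    haveI : Finite (LCC.canon (LCC.subf A)).W :=
      inferInstanceAs (Finite (LCC.Node (LCC.subf A)))
    haveI hTfin : Finite (LCC.TW (LCC.canon (LCC.subf A)) n) := LCC.treeM_finite (LCC.canon (LCC.subf A)) n
    let hroot : (LCC.treeM (LCC.canon (LCC.subf A)) n).W :=
      ⟨[n], by simp, rfl, List.isChain_singleton n⟩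
    have hf := h (LCC.treeM (LCC.canon (LCC.subf A)) n) hTfin
      (LCC.treeM_perfect _ hcp n) (LCC.treeM_tree (LCC.canon (LCC.subf A)) n) hroot
    rw [LCC.tree_forces _ hcp n A hroot] at hf
    have hlast : (hroot.1.getLast hroot.2.1) = n := rfl
    rw [hlast] at hf
    exact hAn ((LCC.truth hS A (LCC.mem_subf_self A) n).mp hf)

end PLHA
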